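/- Let H₁ : L₂^p → L₂^q and H₂ : L₂^q → L₂^p be operators such that at least one of the MIMO SRGs SRG(H₁), SRG(H₂) satisfies the chord property, both SRG(H₁) and SRG(H₂) are bounded subsets of ℂ, and there exists r > 0 such that for every τ ∈ [0,1], dist( { z/|z|² : z ∈ SRG(H₁), z ≠ 0 }, −τ·SRG(H₂) ) ≥ r. Then for every u ∈ L₂^p there exists a unique e ∈ L₂^p with e = u − H₂(H₁ e), and the closed-loop map u ↦ H₁ e has incremental L₂-gain at most 1/r, i.e. ‖H₁e(u₁) − H₁e(u₂)‖ ≤ (1/r)·‖u₁ − u₂‖ for all u₁, u₂ ∈ L₂^p. -/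

import Mathlib

open MeasureTheory ComplexConjugate
open scoped RealInnerProductSpace

/-- `L₂^d = L²([0,∞), ℝ^d)`. -/
noncomputable abbrev L2S (d : ℕ) :=
  MeasureTheory.Lp (EuclideanSpace ℝ (Fin d)) 2 (MeasureTheory.volume.restrict (Set.Ici (0 : ℝ)))

/-- Resize map `ℝ^a → ℝ^b`: zero-padding if `a ≤ b`, projection if `b ≤ a`. -/
noncomputable def resizeCLM (a b : ℕ) :
    EuclideanSpace ℝ (Fin a) →L[ℝ] EuclideanSpace ℝ (Fin b) :=
  LinearMap.toContinuousLinearMap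
    { toFun := fun x => WithLp.toLp 2 (fun i => if h : (i : ℕ) < a then x ⟨(i : ℕ), h⟩ else 0)
      map_add' := by
        intro x y
        ext i
        by_cases h : (i : ℕ) < a <;> simp [PiLp.add_apply, h]
      map_smul' := by
        intro c x
        ext i
        by_cases h : (i : ℕ) < a <;> simp [PiLp.smul_apply, h] }

/-- The induced map on `L₂` spaces; for `a ≤ b` this is the zero-padding embedding `ι_{b←a}`,
for `b ≤ a` the projection `π_{b←a}`. -/
noncomputable def LpResize (a b : ℕ) : L2S a →L[ℝ] L2S b :=
  (resizeCLM a b).compLpL 2 (MeasureTheory.volume.restrict (Set.Ici (0 : ℝ)))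

/-- The pairing `Σ_{i < min(p,q)} ∫₀^∞ Δu_i(t)·Δy_i(t) dt`, realized as the inner product of the
zero-padded signals in `L₂^{max(p,q)}`. -/
noncomputable def mimoPairing {p q : ℕ} (du : L2S p) (dy : L2S q) : ℝ :=
  ⟪LpResize p (max p q) du, LpResize q (max p q) dy⟫

/-- The point `(‖Δy‖/‖Δu‖)·e^{iθ}` with `cos θ` given by the normalized MIMO pairing,
`θ ∈ [0,π]` (equal to `0` when `Δy = 0`). -/
noncomputable def mimoPoint {p q : ℕ} (du : L2S p) (dy : L2S q) : ℂ :=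
  ((‖dy‖ / ‖du‖ : ℝ) : ℂ) *
    Complex.exp (Complex.I * ((Real.arccos (mimoPairing du dy / (‖du‖ * ‖dy‖)) : ℝ) : ℂ))

/-- The MIMO Scaled Relative Graph of an operator `R : L₂^p → L₂^q` (the SRG of the zero-padded
operator on `L₂^{max(p,q)}` over the zero-padded input subspace); both signs of the angle are
included. -/
noncomputable def mimoSRG {p q : ℕ} (R : L2S p → L2S q) : Set ℂ :=
  { z | ∃ u₁ u₂ : L2S p, u₁ ≠ u₂ ∧
      (z = mimoPoint (u₁ - u₂) (R u₁ - R u₂) ∨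
        z = conj (mimoPoint (u₁ - u₂) (R u₁ - R u₂))) }

/-- A set `C ⊆ ℂ` satisfies the chord property if for every `z ∈ C` the segment `[z, z̄]`
is contained in `C`. -/
def ChordProperty (C : Set ℂ) : Prop :=
  ∀ z ∈ C, ∀ α ∈ Set.Icc (0 : ℝ) 1, (α : ℂ) * z + ((1 - α : ℝ) : ℂ) * conj z ∈ C

open scoped NNReal

lemma resizeCLM_apply (a b : ℕ) (x : EuclideanSpace ℝ (Fin a)) (i : Fin b) :
    resizeCLM a b x i = if h : (i : ℕ) < a then x ⟨(i : ℕ), h⟩ else 0 := rfl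

/-- the truncated pairing of two euclidean vectors -/
noncomputable def pairS (c d : ℕ) (x : EuclideanSpace ℝ (Fin c)) (y : EuclideanSpace ℝ (Fin d)) : ℝ :=
  ∑ i ∈ Finset.range (min c d),
    (if h : i < c then x ⟨i, h⟩ else 0) * (if h : i < d then y ⟨i, h⟩ else 0)

lemma resize_inner (c d m : ℕ) (hm : min c d ≤ m)
    (x : EuclideanSpace ℝ (Fin c)) (y : EuclideanSpace ℝ (Fin d)) :
    ⟪resizeCLM c m x, resizeCLM d m y⟫ = pairS c d x y := by
  rw [PiLp.inner_apply]
  have h1 : ∀ i : Fin m, ⟪resizeCLM c m x i, resizeCLM d m y i⟫ =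
      (fun j : ℕ => (if h : j < c then x ⟨j, h⟩ else 0) * (if h : j < d then y ⟨j, h⟩ else 0)) (i : ℕ) := by
    intro i
    simp [resizeCLM_apply, RCLike.inner_apply, conj_trivial]
    split_ifs <;> ring
  calc ∑ i : Fin m, ⟪resizeCLM c m x i, resizeCLM d m y i⟫
      = ∑ i ∈ Finset.range m,
        (if h : i < c then x ⟨i, h⟩ else 0) * (if h : i < d then y ⟨i, h⟩ else 0) := by
        rw [← Fin.sum_univ_eq_sum_range]; exact Finset.sum_congr rfl fun i _ => h1 i
    _ = pairS c d x y := by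
        rw [pairS]
        refine (Finset.sum_subset (Finset.range_subset_range.mpr hm) ?_).symm
        intro i hi hni
        simp only [Finset.mem_range, not_lt] at hni
        rcases lt_or_ge i c with hc | hc
        · have hd : ¬ i < d := by omega
          simp [hd]
        · simp [not_lt.mpr hc]

lemma pairS_self (c : ℕ) (x y : EuclideanSpace ℝ (Fin c)) :
    pairS c c x y = ⟪x, y⟫ := by
  rw [PiLp.inner_apply]
  calc pairS c c x y
      = ∑ i ∈ Finset.range c, (fun j : ℕ =>
          (if h : j < c then x ⟨j, h⟩ else 0) * (if h : j < c then y ⟨j, h⟩ else 0)) i := by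
        rw [pairS, min_self]
    _ = ∑ i : Fin c, (fun j : ℕ =>
          (if h : j < c then x ⟨j, h⟩ else 0) * (if h : j < c then y ⟨j, h⟩ else 0)) (i : ℕ) :=
        (Fin.sum_univ_eq_sum_range _ c).symm
    _ = ∑ i : Fin c, ⟪x i, y i⟫ := by
        refine Finset.sum_congr rfl fun i _ => ?_
        simp [i.isLt, RCLike.inner_apply, conj_trivial]
        ring

lemma LpResize_inner_eq (c d m : ℕ) (hm : min c d ≤ m) (f : L2S c) (g : L2S d) :
    ⟪LpResize c m f, LpResize d m g⟫ =
      ∫ t, pairS c d (f t) (g t) ∂(MeasureTheory.volume.restrict (Set.Ici (0 : ℝ))) := by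
  rw [MeasureTheory.L2.inner_def]
  refine integral_congr_ae ?_
  have hf := ContinuousLinearMap.coeFn_compLpL (resizeCLM c m) f
  have hg := ContinuousLinearMap.coeFn_compLpL (resizeCLM d m) g
  filter_upwards [hf, hg] with t h1 h2
  show ⟪(LpResize c m f : ℝ → EuclideanSpace ℝ (Fin m)) t,
      (LpResize d m g : ℝ → EuclideanSpace ℝ (Fin m)) t⟫ = _
  rw [show ((LpResize c m f : ℝ → EuclideanSpace ℝ (Fin m)) t) = resizeCLM c m (f t) from h1,
    show ((LpResize d m g : ℝ → EuclideanSpace ℝ (Fin m)) t) = resizeCLM d m (g t) from h2]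
  exact resize_inner c d m hm _ _

lemma LpResize_inner_indep (c d m₁ m₂ : ℕ) (h₁ : min c d ≤ m₁) (h₂ : min c d ≤ m₂)
    (f : L2S c) (g : L2S d) :
    ⟪LpResize c m₁ f, LpResize d m₁ g⟫ = ⟪LpResize c m₂ f, LpResize d m₂ g⟫ := by
  rw [LpResize_inner_eq c d m₁ h₁, LpResize_inner_eq c d m₂ h₂]

lemma LpResize_inner_self (c m : ℕ) (hm : c ≤ m) (f g : L2S c) :
    ⟪LpResize c m f, LpResize c m g⟫ = ⟪f, g⟫ := by
  rw [LpResize_inner_eq c c m (by simpa using hm), MeasureTheory.L2.inner_def]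
  exact integral_congr_ae (Filter.Eventually.of_forall fun t => pairS_self c _ _)

lemma LpResize_norm (c m : ℕ) (hm : c ≤ m) (f : L2S c) :
    ‖LpResize c m f‖ = ‖f‖ := by
  have h := LpResize_inner_self c m hm f f
  rw [real_inner_self_eq_norm_sq, real_inner_self_eq_norm_sq] at h
  have := norm_nonneg (LpResize c m f)
  have := norm_nonneg f
  nlinarith

lemma mimoPairing_CS {p q : ℕ} (du : L2S p) (dy : L2S q) :
    |mimoPairing du dy| ≤ ‖du‖ * ‖dy‖ := by
  have h := abs_real_inner_le_norm (LpResize p (max p q) du) (LpResize q (max p q) dy)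
  rwa [LpResize_norm p _ (le_max_left p q), LpResize_norm q _ (le_max_right p q)] at h

lemma mimoPoint_eq {p q : ℕ} (du : L2S p) (dy : L2S q) (hdu : du ≠ 0) :
    mimoPoint du dy =
      Complex.ofReal (mimoPairing du dy / ‖du‖ ^ 2) +
        Complex.ofReal
          (Real.sqrt (‖du‖ ^ 2 * ‖dy‖ ^ 2 - mimoPairing du dy ^ 2) / ‖du‖ ^ 2) * Complex.I := by
  set A := ‖du‖ with hA
  set B := ‖dy‖ with hB
  set a := mimoPairing du dy with ha
  have hA0 : 0 < A := norm_pos_iff.mpr hdu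
  by_cases hB0 : B = 0
  · have hdy : dy = 0 := by rwa [hB, norm_eq_zero] at hB0
    have ha0 : a = 0 := by
      rw [ha, hdy, mimoPairing, map_zero, inner_zero_right]
    rw [mimoPoint, ← ha, ← hA, ← hB, hB0, ha0]
    simp
  · have hB0' : 0 < B := lt_of_le_of_ne (norm_nonneg _) (Ne.symm hB0)
    have hcs := mimoPairing_CS du dy
    rw [← hA, ← hB, ← ha] at hcs
    have hAB : 0 < A * B := mul_pos hA0 hB0'
    have hb1 : -1 ≤ a / (A * B) := by
      rw [le_div_iff₀ hAB]; nlinarith [abs_le.mp hcs]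
    have hb2 : a / (A * B) ≤ 1 := by
      rw [div_le_iff₀ hAB]; nlinarith [abs_le.mp hcs]
    rw [mimoPoint, ← hA, ← hB, ← ha, mul_comm Complex.I, Complex.exp_mul_I]
    rw [← Complex.ofReal_cos, ← Complex.ofReal_sin,
      Real.cos_arccos hb1 hb2, Real.sin_arccos]
    have hsq : A ^ 2 * B ^ 2 - a ^ 2 ≥ 0 := by nlinarith [abs_le.mp hcs]
    have key : (B / A) * Real.sqrt (1 - (a / (A * B)) ^ 2) =
        Real.sqrt (A ^ 2 * B ^ 2 - a ^ 2) / A ^ 2 := by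
      rw [show (1 - (a / (A * B)) ^ 2) = (A ^ 2 * B ^ 2 - a ^ 2) / (A * B) ^ 2 by
        field_simp]
      rw [Real.sqrt_div hsq, Real.sqrt_sq hAB.le]
      field_simp
    have h1 : (B / A) * (a / (A * B)) = a / A ^ 2 := by
      field_simp
    rw [mul_add, ← mul_assoc, ← Complex.ofReal_mul, ← Complex.ofReal_mul, h1, key]

lemma mimoPoint_abs {p q : ℕ} (du : L2S p) (dy : L2S q) (hdu : du ≠ 0) :
    ‖mimoPoint du dy‖ = ‖dy‖ / ‖du‖ := by
  rw [mimoPoint, norm_mul, Complex.norm_real, Real.norm_eq_abs, Complex.norm_exp]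
  have : (Complex.I * ((Real.arccos (mimoPairing du dy / (‖du‖ * ‖dy‖)) : ℝ) : ℂ)).re = 0 := by
    simp [Complex.mul_re]
  rw [this, Real.exp_zero, mul_one, abs_of_nonneg (div_nonneg (norm_nonneg _) (norm_nonneg _))]

set_option maxHeartbeats 1000000 in
set_option maxHeartbeats 1000000 in
lemma key_ineq (p q : ℕ) (H₁ : L2S p → L2S q) (H₂ : L2S q → L2S p)
    (r : ℝ) (hr : 0 < r)
    (hdist : ∀ τ ∈ Set.Icc (0 : ℝ) 1,
      ∀ z₁ ∈ { w : ℂ | ∃ z ∈ mimoSRG H₁, z ≠ 0 ∧ w = z / ((Complex.normSq z : ℝ) : ℂ) },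
      ∀ z₂ ∈ { w : ℂ | ∃ z ∈ mimoSRG H₂, w = -(τ : ℂ) * z },
        r ≤ ‖z₁ - z₂‖)
    (τ : ℝ) (hτ : τ ∈ Set.Icc (0 : ℝ) 1) (u v : L2S p) :
    r * ‖H₁ u - H₁ v‖ ≤ ‖(u - v) + τ • (H₂ (H₁ u) - H₂ (H₁ v))‖ := by
  obtain ⟨hτ0, hτ1⟩ := hτ
  set du := u - v with hdu
  set y := H₁ u - H₁ v with hyd
  set w := H₂ (H₁ u) - H₂ (H₁ v) with hwd
  by_cases hy : y = 0
  · rw [hy, norm_zero, mul_zero]; exact norm_nonneg _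
  · have hne : u ≠ v := by
      intro h; apply hy; rw [hyd, h, sub_self]
    have hdu0 : du ≠ 0 := sub_ne_zero.mpr hne
    have hH : H₁ u ≠ H₁ v := fun h => hy (by rw [hyd, h, sub_self])
    set A := ‖du‖ with hA
    set nY := ‖y‖ with hnY
    set B := ‖w‖ with hB
    have hA0 : 0 < A := norm_pos_iff.mpr hdu0
    have hnY0 : 0 < nY := norm_pos_iff.mpr hy
    set a := mimoPairing du y with ha
    set b := mimoPairing y w with hb
    set ip := ⟪du, w⟫ with hip
    -- Cauchy-Schwarz facts
    have hcs1 : |a| ≤ A * nY := mimoPairing_CS du y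
    have hcs2 : |b| ≤ nY * B := mimoPairing_CS y w
    have hsq1 : a ^ 2 ≤ A ^ 2 * nY ^ 2 := by nlinarith [abs_le.mp hcs1, abs_nonneg a]
    have hsq2 : b ^ 2 ≤ nY ^ 2 * B ^ 2 := by nlinarith [abs_le.mp hcs2, abs_nonneg b]
    set s₁ := Real.sqrt (A ^ 2 * nY ^ 2 - a ^ 2) with hs₁d
    set s₂ := Real.sqrt (nY ^ 2 * B ^ 2 - b ^ 2) with hs₂d
    have hs₁0 : 0 ≤ s₁ := Real.sqrt_nonneg _
    have hs₂0 : 0 ≤ s₂ := Real.sqrt_nonneg _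
    have hs1sq : s₁ ^ 2 = A ^ 2 * nY ^ 2 - a ^ 2 := Real.sq_sqrt (by linarith)
    have hs2sq : s₂ ^ 2 = nY ^ 2 * B ^ 2 - b ^ 2 := Real.sq_sqrt (by linarith)
    -- padded vectors
    set n := max p q with hn
    set U := LpResize p n du with hU
    set Y := LpResize q n y with hY
    set W := LpResize p n w with hW
    have hUY : ⟪U, Y⟫ = a := rfl
    have hYW : ⟪Y, W⟫ = b := by
      rw [hb, mimoPairing]
      exact LpResize_inner_indep q p n (max q p) (by omega) (by omega) y w
    have hUW : ⟪U, W⟫ = ip := LpResize_inner_self p n (le_max_left p q) du w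
    have hUU : ⟪U, U⟫ = A ^ 2 := by
      rw [LpResize_inner_self p n (le_max_left p q), real_inner_self_eq_norm_sq]
    have hYY : ⟪Y, Y⟫ = nY ^ 2 := by
      rw [LpResize_inner_self q n (le_max_right p q), real_inner_self_eq_norm_sq]
    have hWW : ⟪W, W⟫ = B ^ 2 := by
      rw [LpResize_inner_self p n (le_max_left p q), real_inner_self_eq_norm_sq]
    -- the perpendicular-component Cauchy-Schwarz bound
    set c := nY ^ 2 * ip - a * b with hc0
    have haYU : ⟪Y, U⟫ = a := by rw [real_inner_comm]; exact hUY
    have hbWY : ⟪W, Y⟫ = b := by rw [real_inner_comm]; exact hYW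
    have hperp : c ^ 2 ≤ s₁ ^ 2 * s₂ ^ 2 := by
      have h := real_inner_mul_inner_self_le
        ((nY ^ 2 : ℝ) • U - a • Y) ((nY ^ 2 : ℝ) • W - b • Y)
      have e1 : ⟪(nY ^ 2 : ℝ) • U - a • Y, (nY ^ 2 : ℝ) • W - b • Y⟫ = nY ^ 2 * c := by
        simp only [inner_sub_left, inner_sub_right, real_inner_smul_left,
          real_inner_smul_right, hUW, hYW, hYY, hUY, hUU, hWW, haYU, hbWY]
        rw [hc0]; ring
      have e2 : ⟪(nY ^ 2 : ℝ) • U - a • Y, (nY ^ 2 : ℝ) • U - a • Y⟫ = nY ^ 2 * s₁ ^ 2 := by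
        simp only [inner_sub_left, inner_sub_right, real_inner_smul_left,
          real_inner_smul_right, hUW, hYW, hYY, hUY, hUU, hWW, haYU, hbWY]
        rw [hs1sq]; ring
      have e3 : ⟪(nY ^ 2 : ℝ) • W - b • Y, (nY ^ 2 : ℝ) • W - b • Y⟫ = nY ^ 2 * s₂ ^ 2 := by
        simp only [inner_sub_left, inner_sub_right, real_inner_smul_left,
          real_inner_smul_right, hUW, hYW, hYY, hUY, hUU, hWW, haYU, hbWY]
        rw [hs2sq]; ring
      rw [e1, e2, e3] at h
      have h4 : (0 : ℝ) < nY ^ 2 * nY ^ 2 := mul_pos (pow_pos hnY0 2) (pow_pos hnY0 2)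
      refine le_of_mul_le_mul_left ?_ h4
      nlinarith [h]
    have hcge : -(s₁ * s₂) ≤ c := by
      nlinarith [mul_nonneg hs₁0 hs₂0, sq_nonneg (c + s₁ * s₂)]
    -- SRG points
    set z₁ := mimoPoint du y with hz₁
    have hz₁mem : z₁ ∈ mimoSRG H₁ := ⟨u, v, hne, Or.inl rfl⟩
    have hz₁abs : ‖z₁‖ = nY / A := mimoPoint_abs du y hdu0
    have hz₁ne : z₁ ≠ 0 := by
      intro h
      rw [h, norm_zero] at hz₁abs
      exact absurd hz₁abs.symm (ne_of_gt (div_pos hnY0 hA0))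
    set z₂ := mimoPoint y w with hz₂
    have hz₂mem : conj z₂ ∈ mimoSRG H₂ := ⟨H₁ u, H₁ v, hH, Or.inr rfl⟩
    -- explicit coordinates
    have hz₁eq : z₁ = Complex.ofReal (a / A ^ 2) +
        Complex.ofReal (s₁ / A ^ 2) * Complex.I := by
      rw [hz₁, mimoPoint_eq du y hdu0, ← hA, ← hnY, ← ha, ← hs₁d]
    have hz₂eq : z₂ = Complex.ofReal (b / nY ^ 2) +
        Complex.ofReal (s₂ / nY ^ 2) * Complex.I := by
      rw [hz₂, mimoPoint_eq y w hy, ← hnY, ← hB, ← hb, ← hs₂d]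
    have hns : Complex.normSq z₁ = nY ^ 2 / A ^ 2 := by
      rw [hz₁eq, Complex.normSq_add_mul_I]
      have hA2 : (A : ℝ) ≠ 0 := ne_of_gt hA0
      field_simp
      linear_combination hs1sq
    -- apply the distance hypothesis
    have hmem1 : z₁ / ((Complex.normSq z₁ : ℝ) : ℂ) ∈
        { w : ℂ | ∃ z ∈ mimoSRG H₁, z ≠ 0 ∧ w = z / ((Complex.normSq z : ℝ) : ℂ) } :=
      ⟨z₁, hz₁mem, hz₁ne, rfl⟩
    have hmem2 : -(τ : ℂ) * conj z₂ ∈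
        { w : ℂ | ∃ z ∈ mimoSRG H₂, w = -(τ : ℂ) * z } := ⟨conj z₂, hz₂mem, rfl⟩
    have hD := hdist τ ⟨hτ0, hτ1⟩ _ hmem1 _ hmem2
    clear_value z₁ z₂ c U Y W s₁ s₂ ip a b B nY A w y du n
    -- compute the difference
    have hinv : z₁ / ((Complex.normSq z₁ : ℝ) : ℂ) =
        Complex.ofReal (a / nY ^ 2) + Complex.ofReal (s₁ / nY ^ 2) * Complex.I := by
      rw [hns, hz₁eq]
      have hAc : (A : ℂ) ≠ 0 := Complex.ofReal_ne_zero.mpr (ne_of_gt hA0)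
      have hnYc : (nY : ℂ) ≠ 0 := Complex.ofReal_ne_zero.mpr (ne_of_gt hnY0)
      push_cast
      field_simp
    have hdiff : z₁ / ((Complex.normSq z₁ : ℝ) : ℂ) - (-(τ : ℂ) * conj z₂) =
        Complex.ofReal (a / nY ^ 2 + τ * (b / nY ^ 2)) +
          Complex.ofReal (s₁ / nY ^ 2 - τ * (s₂ / nY ^ 2)) * Complex.I := by
      rw [hinv, hz₂eq, map_add, map_mul, Complex.conj_ofReal, Complex.conj_ofReal,
        Complex.conj_I]
      push_cast
      ring
    have habs2 : r ^ 2 ≤ (a / nY ^ 2 + τ * (b / nY ^ 2)) ^ 2 +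
        (s₁ / nY ^ 2 - τ * (s₂ / nY ^ 2)) ^ 2 := by
      have h1 : r ^ 2 ≤ ‖z₁ / ((Complex.normSq z₁ : ℝ) : ℂ) -
          (-(τ : ℂ) * conj z₂)‖ ^ 2 := by
        exact pow_le_pow_left₀ hr.le hD 2
      rwa [hdiff, Complex.sq_norm, Complex.normSq_add_mul_I] at h1
    have h2 : r ^ 2 * (nY ^ 2) ^ 2 ≤ (a + τ * b) ^ 2 + (s₁ - τ * s₂) ^ 2 := by
      have hpos : (0 : ℝ) < (nY ^ 2) ^ 2 := by positivity
      have e : (a / nY ^ 2 + τ * (b / nY ^ 2)) ^ 2 +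
          (s₁ / nY ^ 2 - τ * (s₂ / nY ^ 2)) ^ 2 =
          ((a + τ * b) ^ 2 + (s₁ - τ * s₂) ^ 2) / (nY ^ 2) ^ 2 := by
        field_simp
      rwa [e, le_div_iff₀ hpos] at habs2
    -- norm expansion
    have hnorm : ‖du + τ • w‖ ^ 2 = A ^ 2 + 2 * τ * ip + τ ^ 2 * B ^ 2 := by
      have hduw : ⟪du, w⟫ = ip := hip.symm
      have hwdu : ⟪w, du⟫ = ip := by rw [real_inner_comm, ← hip]
      rw [← real_inner_self_eq_norm_sq]
      simp only [inner_add_left, inner_add_right, real_inner_smul_left,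
        real_inner_smul_right, hduw, hwdu]
      rw [real_inner_self_eq_norm_sq, real_inner_self_eq_norm_sq, ← hA, ← hB]
      ring
    -- final inequality
    have hmain : r ^ 2 * nY ^ 2 ≤ ‖du + τ • w‖ ^ 2 := by
      rw [hnorm]
      have e4 : nY ^ 2 * (A ^ 2 + 2 * τ * ip + τ ^ 2 * B ^ 2) =
          (a + τ * b) ^ 2 + (s₁ - τ * s₂) ^ 2 + 2 * τ * (c + s₁ * s₂) := by
        linear_combination (-1 : ℝ) * hs1sq - τ ^ 2 * hs2sq - 2 * τ * hc0
      have e5 : 0 ≤ 2 * τ * (c + s₁ * s₂) :=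
        mul_nonneg (by linarith only [hτ0]) (by linarith only [hcge])
      have h6 : nY ^ 2 * (r ^ 2 * nY ^ 2) ≤ nY ^ 2 * (A ^ 2 + 2 * τ * ip + τ ^ 2 * B ^ 2) := by
        linarith only [h2, e5, e4]
      exact le_of_mul_le_mul_left h6 (pow_pos hnY0 2)
    calc r * nY = Real.sqrt ((r * nY) ^ 2) := (Real.sqrt_sq (by positivity)).symm
      _ ≤ Real.sqrt (‖du + τ • w‖ ^ 2) := Real.sqrt_le_sqrt (by linarith only [hmain])
      _ = ‖du + τ • w‖ := Real.sqrt_sq (norm_nonneg (du + τ • w))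

lemma surj_homotopy {X : Type*} [NormedAddCommGroup X] [NormedSpace ℝ X] [CompleteSpace X]
    (G : X → X) (C L : ℝ) (hC : 0 < C) (hL : 0 ≤ L)
    (hG : ∀ u v, ‖G u - G v‖ ≤ L * ‖u - v‖)
    (hlow : ∀ τ ∈ Set.Icc (0 : ℝ) 1, ∀ u v : X,
      ‖u - v‖ ≤ C * ‖(u + τ • G u) - (v + τ • G v)‖) :
    Function.Surjective (fun e => e + (1 : ℝ) • G e) := by
  haveI : Nonempty X := ⟨0⟩
  set δ := 1 / (2 * C * (L + 1)) with hδ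
  have hL1 : (0 : ℝ) < L + 1 := by linarith
  have hδ0 : 0 < δ := by positivity
  have hCδ : C * δ = 1 / (2 * (L + 1)) := by
    rw [hδ]; field_simp
  have hstep : ∀ τ ∈ Set.Icc (0 : ℝ) 1, Function.Surjective (fun e => e + τ • G e) →
      ∀ τ' ∈ Set.Icc (0 : ℝ) 1, |τ' - τ| ≤ δ →
      Function.Surjective (fun e => e + τ' • G e) := by
    intro τ hτ hs τ' hτ' hd g
    have hsurj : ∀ x : X, Function.surjInv hs x + τ • G (Function.surjInv hs x) = x :=
      fun x => Function.surjInv_eq hs x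
    set Φ : X → X := fun e => Function.surjInv hs (g - (τ' - τ) • G e) with hΦ
    have hFΦ : ∀ e, Φ e + τ • G (Φ e) = g - (τ' - τ) • G e := fun e => hsurj _
    have hlip : ∀ e e', ‖Φ e - Φ e'‖ ≤ 2⁻¹ * ‖e - e'‖ := by
      intro e e'
      have h1 := hlow τ hτ (Φ e) (Φ e')
      rw [hFΦ e, hFΦ e'] at h1
      have h2 : (g - (τ' - τ) • G e) - (g - (τ' - τ) • G e') = (τ' - τ) • (G e' - G e) := by
        rw [smul_sub]; abel
      rw [h2, norm_smul, Real.norm_eq_abs] at h1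
      have h3 : ‖G e' - G e‖ ≤ L * ‖e - e'‖ :=
        le_trans (hG e' e) (by rw [norm_sub_rev])
      have h4 : |τ' - τ| * ‖G e' - G e‖ ≤ δ * (L * ‖e - e'‖) :=
        mul_le_mul hd h3 (norm_nonneg _) hδ0.le
      calc ‖Φ e - Φ e'‖ ≤ C * (|τ' - τ| * ‖G e' - G e‖) := h1
        _ ≤ C * (δ * (L * ‖e - e'‖)) := by
            exact mul_le_mul_of_nonneg_left h4 hC.le
        _ = (C * δ) * (L * ‖e - e'‖) := by ring
        _ = (L * ‖e - e'‖) / (2 * (L + 1)) := by rw [hCδ]; ring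
        _ ≤ 2⁻¹ * ‖e - e'‖ := by
            rw [div_le_iff₀ (by linarith)]
            nlinarith [norm_nonneg (e - e')]
    have hcontr : ContractingWith (1/2 : ℝ≥0) Φ := by
      constructor
      · rw [← NNReal.coe_lt_coe]
        norm_num
      · apply LipschitzWith.of_dist_le_mul
        intro x y
        rw [dist_eq_norm, dist_eq_norm]
        calc ‖Φ x - Φ y‖ ≤ 2⁻¹ * ‖x - y‖ := hlip x y
          _ = ((1/2 : ℝ≥0) : ℝ) * ‖x - y‖ := by norm_num
    set e0 := hcontr.fixedPoint Φ with he0d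
    have he0 : Φ e0 = e0 := hcontr.fixedPoint_isFixedPt
    refine ⟨e0, ?_⟩
    have hfe := hFΦ e0
    rw [he0] at hfe
    show e0 + τ' • G e0 = g
    have hsplit : e0 + τ' • G e0 = (e0 + τ • G e0) + (τ' - τ) • G e0 := by
      rw [show τ' = τ + (τ' - τ) by ring, add_smul]; abel
    rw [hsplit, hfe]
    abel
  have hind : ∀ k : ℕ, Function.Surjective (fun e => e + (min ((k : ℝ) * δ) 1) • G e) := by
    intro k
    induction k with
    | zero => exact fun g => ⟨g, by simp⟩
    | succ k ih =>
        have hmono : min ((k : ℝ) * δ) 1 ≤ min (((k : ℝ) + 1) * δ) 1 :=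
          min_le_min (by nlinarith) le_rfl
        have hupper : min (((k : ℝ) + 1) * δ) 1 ≤ min ((k : ℝ) * δ) 1 + δ := by
          rcases le_total ((k : ℝ) * δ) 1 with h | h
          · rw [min_eq_left h]
            calc min (((k : ℝ) + 1) * δ) 1 ≤ ((k : ℝ) + 1) * δ := min_le_left _ _
              _ = (k : ℝ) * δ + δ := by ring
          · rw [min_eq_right h]
            calc min (((k : ℝ) + 1) * δ) 1 ≤ 1 := min_le_right _ _
              _ ≤ 1 + δ := by linarith
        have habs : |min (((k : ℝ) + 1) * δ) 1 - min ((k : ℝ) * δ) 1| ≤ δ :=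
          abs_le.mpr ⟨by linarith, by linarith⟩
        have hres := hstep (min ((k : ℝ) * δ) 1)
          ⟨le_min (by positivity) zero_le_one, min_le_right _ _⟩ ih
          (min (((k : ℝ) + 1) * δ) 1)
          ⟨le_min (by positivity) zero_le_one, min_le_right _ _⟩ habs
        rw [show ((k + 1 : ℕ) : ℝ) = (k : ℝ) + 1 by push_cast; ring]
        exact hres
  obtain ⟨k, hk⟩ := exists_nat_ge (1 / δ)
  have h1 : min ((k : ℝ) * δ) 1 = 1 := min_eq_right ((div_le_iff₀ hδ0).mp hk)
  have hfin := hind k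
  rwa [h1] at hfin


lemma srg_lipschitz {p q : ℕ} (R : L2S p → L2S q) (hb : Bornology.IsBounded (mimoSRG R)) :
    ∃ L : ℝ, 0 ≤ L ∧ ∀ u v : L2S p, ‖R u - R v‖ ≤ L * ‖u - v‖ := by
  obtain ⟨Cb, hCb⟩ := isBounded_iff_forall_norm_le.mp hb
  refine ⟨max Cb 0, le_max_right _ _, fun u v => ?_⟩
  by_cases h : u = v
  · simp [h]
  · have hmem : mimoPoint (u - v) (R u - R v) ∈ mimoSRG R := ⟨u, v, h, Or.inl rfl⟩
    have habs := hCb _ hmem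
    have hdu0 : u - v ≠ 0 := sub_ne_zero.mpr h
    rw [mimoPoint_abs (u - v) (R u - R v) hdu0] at habs
    have hpos : 0 < ‖u - v‖ := norm_pos_iff.mpr hdu0
    rw [div_le_iff₀ hpos] at habs
    calc ‖R u - R v‖ ≤ Cb * ‖u - v‖ := habs
      _ ≤ max Cb 0 * ‖u - v‖ :=
        mul_le_mul_of_nonneg_right (le_max_left _ _) (norm_nonneg _)

/-- incremental MIMO SRG stability theorem: if at least one of `SRG(H₁)`,
`SRG(H₂)` satisfies the chord property, both SRGs are bounded, and the Möbius inverse of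
`SRG(H₁)` stays at distance at least `r > 0` from `−τ·SRG(H₂)` for all `τ ∈ [0,1]`, then for
every `u ∈ L₂^p` the feedback equation `e = u − H₂(H₁ e)` has a unique solution `e = E u`, and
the closed-loop map `u ↦ H₁(E u)` has incremental `L₂`-gain at most `1/r`. -/
theorem stmt14 (p q : ℕ) (H₁ : L2S p → L2S q) (H₂ : L2S q → L2S p)
    (hchord : ChordProperty (mimoSRG H₁) ∨ ChordProperty (mimoSRG H₂))
    (hb1 : Bornology.IsBounded (mimoSRG H₁)) (hb2 : Bornology.IsBounded (mimoSRG H₂))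
    (r : ℝ) (hr : 0 < r)
    (hdist : ∀ τ ∈ Set.Icc (0 : ℝ) 1,
      ∀ z₁ ∈ { w : ℂ | ∃ z ∈ mimoSRG H₁, z ≠ 0 ∧ w = z / ((Complex.normSq z : ℝ) : ℂ) },
      ∀ z₂ ∈ { w : ℂ | ∃ z ∈ mimoSRG H₂, w = -(τ : ℂ) * z },
        r ≤ ‖z₁ - z₂‖) :
    ∃ E : L2S p → L2S p,
      (∀ u, E u = u - H₂ (H₁ (E u))) ∧
      (∀ u e, e = u - H₂ (H₁ e) → e = E u) ∧
      (∀ u₁ u₂, ‖H₁ (E u₁) - H₁ (E u₂)‖ ≤ (1 / r) * ‖u₁ - u₂‖) := by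
  obtain ⟨L₁, hL₁0, hL₁⟩ := srg_lipschitz H₁ hb1
  obtain ⟨L₂, hL₂0, hL₂⟩ := srg_lipschitz H₂ hb2
  have hGlip : ∀ u v : L2S p, ‖H₂ (H₁ u) - H₂ (H₁ v)‖ ≤ (L₂ * L₁) * ‖u - v‖ := by
    intro u v
    calc ‖H₂ (H₁ u) - H₂ (H₁ v)‖ ≤ L₂ * ‖H₁ u - H₁ v‖ := hL₂ _ _
      _ ≤ L₂ * (L₁ * ‖u - v‖) := mul_le_mul_of_nonneg_left (hL₁ u v) hL₂0
      _ = (L₂ * L₁) * ‖u - v‖ := by ring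
  have hkey : ∀ τ ∈ Set.Icc (0 : ℝ) 1, ∀ u v : L2S p,
      r * ‖H₁ u - H₁ v‖ ≤ ‖(u + τ • H₂ (H₁ u)) - (v + τ • H₂ (H₁ v))‖ := by
    intro τ hτ u v
    have h := key_ineq p q H₁ H₂ r hr hdist τ hτ u v
    have he : (u + τ • H₂ (H₁ u)) - (v + τ • H₂ (H₁ v)) =
        (u - v) + τ • (H₂ (H₁ u) - H₂ (H₁ v)) := by
      rw [smul_sub]; abel
    rw [he]
    exact h
  set Cq : ℝ := 1 + L₂ / r with hCq
  have hCq0 : 0 < Cq := by positivity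
  have hlow : ∀ τ ∈ Set.Icc (0 : ℝ) 1, ∀ u v : L2S p,
      ‖u - v‖ ≤ Cq * ‖(u + τ • H₂ (H₁ u)) - (v + τ • H₂ (H₁ v))‖ := by
    rintro τ ⟨hτ0, hτ1⟩ u v
    have h1 := hkey τ ⟨hτ0, hτ1⟩ u v
    have h2 : u - v = ((u + τ • H₂ (H₁ u)) - (v + τ • H₂ (H₁ v))) -
        τ • (H₂ (H₁ u) - H₂ (H₁ v)) := by
      rw [smul_sub]; abel
    have h3 : ‖H₂ (H₁ u) - H₂ (H₁ v)‖ ≤ L₂ * ‖H₁ u - H₁ v‖ := hL₂ _ _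
    have h4 : r * ‖H₁ u - H₁ v‖ ≤ ‖(u + τ • H₂ (H₁ u)) - (v + τ • H₂ (H₁ v))‖ := h1
    have habs : |τ| ≤ 1 := abs_le.mpr ⟨by linarith, hτ1⟩
    calc ‖u - v‖ = ‖((u + τ • H₂ (H₁ u)) - (v + τ • H₂ (H₁ v))) -
          τ • (H₂ (H₁ u) - H₂ (H₁ v))‖ := by rw [← h2]
      _ ≤ ‖(u + τ • H₂ (H₁ u)) - (v + τ • H₂ (H₁ v))‖ +
          ‖τ • (H₂ (H₁ u) - H₂ (H₁ v))‖ := norm_sub_le _ _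
      _ = ‖(u + τ • H₂ (H₁ u)) - (v + τ • H₂ (H₁ v))‖ +
          |τ| * ‖H₂ (H₁ u) - H₂ (H₁ v)‖ := by rw [norm_smul, Real.norm_eq_abs]
      _ ≤ Cq * ‖(u + τ • H₂ (H₁ u)) - (v + τ • H₂ (H₁ v))‖ := by
          rw [hCq]
          have h5 : |τ| * ‖H₂ (H₁ u) - H₂ (H₁ v)‖ ≤ L₂ * ‖H₁ u - H₁ v‖ := by
            calc |τ| * ‖H₂ (H₁ u) - H₂ (H₁ v)‖ ≤ 1 * (L₂ * ‖H₁ u - H₁ v‖) :=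
                mul_le_mul habs h3 (norm_nonneg _) zero_le_one
              _ = L₂ * ‖H₁ u - H₁ v‖ := one_mul _
          have h6 : L₂ * ‖H₁ u - H₁ v‖ ≤
              L₂ / r * ‖(u + τ • H₂ (H₁ u)) - (v + τ • H₂ (H₁ v))‖ := by
            rw [div_mul_eq_mul_div, le_div_iff₀ hr]
            nlinarith [h4, hL₂0]
          linarith [h5, h6]
  have hsurj := surj_homotopy (fun e => H₂ (H₁ e)) Cq (L₂ * L₁) hCq0
    (mul_nonneg hL₂0 hL₁0) hGlip hlow
  have hinj : ∀ u v : L2S p, u + H₂ (H₁ u) = v + H₂ (H₁ v) → u = v := by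
    intro u v h
    have hl := hlow 1 ⟨zero_le_one, le_rfl⟩ u v
    have h0 : (u + (1 : ℝ) • H₂ (H₁ u)) - (v + (1 : ℝ) • H₂ (H₁ v)) = 0 := by
      rw [one_smul, one_smul, h, sub_self]
    rw [h0, norm_zero, mul_zero] at hl
    have hz : ‖u - v‖ = 0 := le_antisymm hl (norm_nonneg _)
    exact sub_eq_zero.mp (norm_eq_zero.mp hz)
  set E : L2S p → L2S p := fun u => Function.surjInv hsurj u with hE
  have hEeq : ∀ u, E u + H₂ (H₁ (E u)) = u := by
    intro u
    have h := Function.surjInv_eq hsurj u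
    simp only [hE]
    simpa using h
  refine ⟨E, ?_, ?_, ?_⟩
  · intro u
    exact (eq_sub_of_add_eq (hEeq u))
  · intro u e he
    apply hinj
    have h1 : e + H₂ (H₁ e) = u := eq_sub_iff_add_eq.mp he
    rw [h1, hEeq u]
  · intro u₁ u₂
    have hk := hkey 1 ⟨zero_le_one, le_rfl⟩ (E u₁) (E u₂)
    rw [one_smul, one_smul, hEeq u₁, hEeq u₂] at hk
    have h2 : ‖H₁ (E u₁) - H₁ (E u₂)‖ ≤ ‖u₁ - u₂‖ / r :=
      (le_div_iff₀ hr).mpr (by linarith [hk])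
    calc ‖H₁ (E u₁) - H₁ (E u₂)‖ ≤ ‖u₁ - u₂‖ / r := h2
      _ = 1 / r * ‖u₁ - u₂‖ := by ring
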